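/- If τ is an a.s. finite stopping time with respect to the natural filtration of the simple symmetric random walk such that the stopped process (X_{n∧τ})_{n≥0} is a uniformly integrable martingale, then τ is minimal. -/

import Mathlib

open MeasureTheory ProbabilityTheory Filter Set
open scoped ENNReal NNReal Topology

noncomputable section

namespace RWSkorokhod

variable {Ω : Type*} [MeasurableSpace Ω]

/-- The simple symmetric random walk `X n = ξ 1 + ⋯ + ξ n` built from the steps `ξ`. -/
def walk (ξ : ℕ → Ω → ℤ) (n : ℕ) (ω : Ω) : ℤ :=
  ∑ k ∈ Finset.Icc 1 n, ξ k ω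

/-- `ξ` is a sequence of i.i.d. symmetric `±1` steps under the probability measure `P`. -/
structure IsSSRW (P : Measure Ω) (ξ : ℕ → Ω → ℤ) : Prop where
  isProb : IsProbabilityMeasure P
  meas : ∀ k, Measurable (ξ k)
  indep : iIndepFun ξ P
  up : ∀ k, P {ω | ξ k ω = 1} = 1 / 2
  down : ∀ k, P {ω | ξ k ω = -1} = 1 / 2

lemma measurable_walk (ξ : ℕ → Ω → ℤ) (hm : ∀ k, Measurable (ξ k)) (n : ℕ) :
    Measurable (walk ξ n) :=
  Finset.measurable_sum _ fun k _ => hm k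

/-- The natural filtration of the random walk: `F n = σ(X 0, …, X n)`. -/
def natFilt (ξ : ℕ → Ω → ℤ) (hm : ∀ k, Measurable (ξ k)) :
    Filtration ℕ ‹MeasurableSpace Ω› where
  seq n := ⨆ k ∈ Set.Iic n, MeasurableSpace.comap (walk ξ k) inferInstance
  mono' i _ hij := biSup_mono fun k (hk : k ∈ Set.Iic i) => le_trans hk hij
  le' _ := iSup₂_le fun k _ => (measurable_walk ξ hm k).comap_le

/-- `τ` is an (extended-natural-number valued) stopping time for the filtration `F`. -/
def IsStop (F : Filtration ℕ ‹MeasurableSpace Ω›) (τ : Ω → ℕ∞) : Prop :=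
  ∀ n : ℕ, MeasurableSet[F n] {ω | τ ω ≤ (n : ℕ∞)}

/-- `τ` is almost surely finite. -/
def AEFinite (P : Measure Ω) (τ : Ω → ℕ∞) : Prop :=
  ∀ᵐ ω ∂P, τ ω < ⊤

/-- The value `X_τ` of the walk at the stopping time `τ` (junk on `{τ = ∞}`). -/
def stopVal (ξ : ℕ → Ω → ℤ) (τ : Ω → ℕ∞) (ω : Ω) : ℤ :=
  walk ξ (τ ω).toNat ω

/-- The stopped process `X_{n ∧ τ}`, viewed as a real-valued process. -/
def stopProc (ξ : ℕ → Ω → ℤ) (τ : Ω → ℕ∞) (n : ℕ) (ω : Ω) : ℝ :=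
  ((walk ξ (min (n : ℕ∞) (τ ω)).toNat ω : ℤ) : ℝ)

/-- `τ` embeds the measure `μ` : the law of `X_τ` under `P` is `μ`. -/
def Embeds (P : Measure Ω) (ξ : ℕ → Ω → ℤ) (τ : Ω → ℕ∞) (μ : Measure ℤ) : Prop :=
  Measure.map (stopVal ξ τ) P = μ

/-- `τ` is a UI stopping time: an a.s. finite stopping time of the natural filtration such
that the stopped process `(X_{n ∧ τ})` is a uniformly integrable martingale. -/
def IsUIStop (P : Measure Ω) (ξ : ℕ → Ω → ℤ) (hm : ∀ k, Measurable (ξ k))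
    (τ : Ω → ℕ∞) : Prop :=
  IsStop (natFilt ξ hm) τ ∧ AEFinite P τ ∧
    Martingale (stopProc ξ τ) (natFilt ξ hm) P ∧
    UniformIntegrable (stopProc ξ τ) 1 P

/-- The set `M₀^UI` of probability measures on `ℤ` which can be embedded in the random
walk by a UI stopping time of its natural filtration. -/
def MUI (P : Measure Ω) (ξ : ℕ → Ω → ℤ) (hm : ∀ k, Measurable (ξ k)) : Set (Measure ℤ) :=
  {μ | ∃ τ : Ω → ℕ∞, IsUIStop P ξ hm τ ∧ Embeds P ξ τ μ}

/-- A centered probability measure on `ℤ`: finite first moment and mean zero. -/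
def Centered (μ : Measure ℤ) : Prop :=
  IsProbabilityMeasure μ ∧ Integrable (fun n : ℤ => (n : ℝ)) μ ∧
    (∫ n : ℤ, (n : ℝ) ∂μ) = 0

/-- `τ` is a minimal stopping time: any stopping time `σ ≤ τ` a.s. with `X_σ ∼ X_τ`
equals `τ` a.s. -/
def Minimal (P : Measure Ω) (ξ : ℕ → Ω → ℤ) (hm : ∀ k, Measurable (ξ k))
    (τ : Ω → ℕ∞) : Prop :=
  ∀ σ : Ω → ℕ∞, IsStop (natFilt ξ hm) σ → (∀ᵐ ω ∂P, σ ω ≤ τ ω) →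
    Measure.map (stopVal ξ σ) P = Measure.map (stopVal ξ τ) P → σ =ᵐ[P] τ

/-- The measure `μ_p = p δ₀ + ((1-p)/2)(δ₋₂ + δ₂)` on `ℤ`. -/
def muP (p : ℝ) : Measure ℤ :=
  ENNReal.ofReal p • Measure.dirac 0 +
    ENNReal.ofReal ((1 - p) / 2) • (Measure.dirac (-2) + Measure.dirac 2)

/-- The set `S` of `p ∈ [0,1]` such that `μ_p` admits a UI embedding. -/
def Sset (P : Measure Ω) (ξ : ℕ → Ω → ℤ) (hm : ∀ k, Measurable (ξ k)) : Set ℝ :=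
  {p | p ∈ Set.Icc (0 : ℝ) 1 ∧ muP p ∈ MUI P ξ hm}

/-- The exit time `H_N = inf {n : X n ∉ [-N, N]}`. -/
def exitTime (ξ : ℕ → Ω → ℤ) (N : ℕ) (ω : Ω) : ℕ∞ :=
  ⨅ (n : ℕ) (_ : walk ξ n ω ∉ Set.Icc (-(N : ℤ)) (N : ℤ)), (n : ℕ∞)


set_option linter.unusedSectionVars false
section Aux

variable {Ω : Type*} [m0 : MeasurableSpace Ω]

lemma walk_zero (ξ : ℕ → Ω → ℤ) (ω : Ω) : walk ξ 0 ω = 0 := by simp [walk]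

lemma walk_succ (ξ : ℕ → Ω → ℤ) (n : ℕ) (ω : Ω) :
    walk ξ (n + 1) ω = walk ξ n ω + ξ (n + 1) ω := by
  rw [walk, walk, Finset.sum_Icc_succ_top (by omega)]

lemma abs_walk_le {ξ : ℕ → Ω → ℤ} {ω : Ω} (h : ∀ k, ξ k ω = 1 ∨ ξ k ω = -1) (n : ℕ) :
    |walk ξ n ω| ≤ (n : ℤ) := by
  induction n with
  | zero => simp [walk_zero]
  | succ n ih =>
    rw [walk_succ]
    calc |walk ξ n ω + ξ (n + 1) ω| ≤ |walk ξ n ω| + |ξ (n + 1) ω| := abs_add_le _ _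
      _ ≤ (n : ℤ) + 1 := by
          rcases h (n + 1) with h' | h' <;> rw [h'] <;> simp <;> exact ih
      _ = ((n + 1 : ℕ) : ℤ) := by push_cast; ring

lemma IsSSRW.ae_pm {P : Measure Ω} {ξ : ℕ → Ω → ℤ} (W : IsSSRW P ξ) :
    ∀ᵐ ω ∂P, ∀ k, ξ k ω = 1 ∨ ξ k ω = -1 := by
  haveI := W.isProb
  rw [ae_all_iff]
  intro k
  have h1 : MeasurableSet {ω | ξ k ω = 1} := W.meas k (MeasurableSet.of_discrete (s := {1}))
  have h2 : MeasurableSet {ω | ξ k ω = -1} := W.meas k (MeasurableSet.of_discrete (s := {-1}))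
  have hd : Disjoint {ω | ξ k ω = 1} {ω | ξ k ω = -1} := by
    rw [Set.disjoint_left]; rintro ω h1 h2; simp only [Set.mem_setOf_eq] at h1 h2; omega
  have hu : P ({ω | ξ k ω = 1} ∪ {ω | ξ k ω = -1}) = 1 := by
    rw [measure_union hd h2, W.up, W.down, ENNReal.add_halves]
  have hc : P ({ω | ξ k ω = 1} ∪ {ω | ξ k ω = -1})ᶜ = 0 := by
    rw [measure_compl (h1.union h2) (measure_ne_top _ _), hu, measure_univ, tsub_self]
  refine measure_mono_null (fun ω hω => ?_) hc
  simp only [Set.mem_compl_iff, Set.mem_union, Set.mem_setOf_eq] at hω ⊢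
  tauto

lemma IsStop.meas_le {F : Filtration ℕ m0} {ρ : Ω → ℕ∞} (hρ : IsStop F ρ) (n : ℕ) :
    MeasurableSet {ω | ρ ω ≤ (n : ℕ∞)} := F.le n _ (hρ n)

lemma IsStop.lvl {F : Filtration ℕ m0} {ρ : Ω → ℕ∞} (hρ : IsStop F ρ) {k j : ℕ} (hkj : k ≤ j) :
    MeasurableSet[F j] {ω | ρ ω = (k : ℕ∞)} := by
  cases k with
  | zero =>
    have : {ω | ρ ω = ((0 : ℕ) : ℕ∞)} = {ω | ρ ω ≤ ((0 : ℕ) : ℕ∞)} := by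
      ext ω; simp [le_zero_iff]
    rw [this]; exact F.mono (by omega) _ (hρ 0)
  | succ m =>
    have : {ω | ρ ω = ((m + 1 : ℕ) : ℕ∞)} =
        {ω | ρ ω ≤ ((m + 1 : ℕ) : ℕ∞)} \ {ω | ρ ω ≤ ((m : ℕ) : ℕ∞)} := by
      ext ω
      simp only [Set.mem_setOf_eq, Set.mem_diff, not_le]
      constructor
      · intro h; rw [h]; constructor
        · exact le_refl _
        · exact_mod_cast Nat.lt_succ_self m
      · rintro ⟨h1, h2⟩
        refine le_antisymm h1 ?_
        have : ((m : ℕ∞) + 1) ≤ ρ ω := ENat.add_one_le_iff (by simp) |>.mpr h2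
        simpa [Nat.cast_add, Nat.cast_one] using this
    rw [this]
    exact MeasurableSet.diff (F.mono (by omega) _ (hρ (m + 1))) (F.mono (by omega) _ (hρ m))

lemma IsStop.meas_lvl {F : Filtration ℕ m0} {ρ : Ω → ℕ∞} (hρ : IsStop F ρ) (k : ℕ) :
    MeasurableSet {ω | ρ ω = (k : ℕ∞)} := F.le k _ (hρ.lvl le_rfl)

lemma IsStop.meas_top {F : Filtration ℕ m0} {ρ : Ω → ℕ∞} (hρ : IsStop F ρ) :
    MeasurableSet {ω | ρ ω = ⊤} := by
  have : {ω | ρ ω = ⊤} = (⋃ n : ℕ, {ω | ρ ω ≤ (n : ℕ∞)})ᶜ := by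
    ext ω
    simp only [Set.mem_compl_iff, Set.mem_iUnion, Set.mem_setOf_eq, not_exists]
    constructor
    · intro h n; rw [h]; simp
    · intro h
      by_contra hne
      lift ρ ω to ℕ using hne with n hn
      exact h n le_rfl
  rw [this]
  exact (MeasurableSet.iUnion fun n => hρ.meas_le n).compl

lemma walk_mem_natFilt (ξ : ℕ → Ω → ℤ) (hm : ∀ k, Measurable (ξ k)) {k n : ℕ}
    (hkn : k ≤ n) (s : Set ℤ) :
    MeasurableSet[natFilt ξ hm n] (walk ξ k ⁻¹' s) := by
  have hle : MeasurableSpace.comap (walk ξ k) inferInstance ≤ natFilt ξ hm n := by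
    refine le_trans ?_ (le_refl _)
    exact le_biSup (f := fun k => MeasurableSpace.comap (walk ξ k) inferInstance)
      (by exact hkn : k ∈ Set.Iic n)
  exact hle _ ⟨s, .of_discrete, rfl⟩

lemma measurable_stopVal {F : Filtration ℕ m0} (ξ : ℕ → Ω → ℤ) (hm : ∀ k, Measurable (ξ k))
    {ρ : Ω → ℕ∞} (hρ : IsStop F ρ) : Measurable (stopVal ξ ρ) := by
  intro s _
  have hset : stopVal ξ ρ ⁻¹' s =
      ({ω | ρ ω = ⊤} ∩ walk ξ 0 ⁻¹' s) ∪ ⋃ k : ℕ, ({ω | ρ ω = (k : ℕ∞)} ∩ walk ξ k ⁻¹' s) := by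
    ext ω
    simp only [Set.mem_preimage, Set.mem_union, Set.mem_inter_iff, Set.mem_iUnion,
      Set.mem_setOf_eq]
    rcases eq_or_ne (ρ ω) ⊤ with h | h
    · simp [stopVal, h]
    · lift ρ ω to ℕ using h with n hn
      constructor
      · intro hs; exact Or.inr ⟨n, rfl, by simpa [stopVal, ← hn] using hs⟩
      · rintro (⟨h1, _⟩ | ⟨k, hk, hks⟩)
        · exact absurd h1 (by simp)
        · have : n = k := by exact_mod_cast hk
          subst this
          simpa [stopVal, ← hn] using hks
  rw [hset]
  refine MeasurableSet.union (hρ.meas_top.inter ((measurable_walk ξ hm 0) .of_discrete)) ?_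
  exact MeasurableSet.iUnion fun k =>
    (hρ.meas_lvl k).inter ((measurable_walk ξ hm k) .of_discrete)

end Aux
section Aux2

variable {Ω : Type*} [m0 : MeasurableSpace Ω]

/-- The σ-algebra of the past up to the (extended-valued) stopping time `ρ`. -/
def stopSA (F : Filtration ℕ m0) (ρ : Ω → ℕ∞) (hρ : IsStop F ρ) : MeasurableSpace Ω where
  MeasurableSet' B := MeasurableSet B ∧ ∀ j : ℕ, MeasurableSet[F j] (B ∩ {ω | ρ ω ≤ (j : ℕ∞)})
  measurableSet_empty :=
    ⟨MeasurableSet.empty, fun j => by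
      rw [Set.empty_inter]; exact @MeasurableSet.empty _ (F j)⟩
  measurableSet_compl B hB :=
    ⟨hB.1.compl, fun j => by
      have : Bᶜ ∩ {ω | ρ ω ≤ (j : ℕ∞)} =
          {ω | ρ ω ≤ (j : ℕ∞)} \ (B ∩ {ω | ρ ω ≤ (j : ℕ∞)}) := by
        ext ω; simp only [Set.mem_inter_iff, Set.mem_compl_iff, Set.mem_diff, Set.mem_setOf_eq]
        tauto
      rw [this]; exact (hρ j).diff (hB.2 j)⟩
  measurableSet_iUnion B hB :=
    ⟨MeasurableSet.iUnion fun i => (hB i).1, fun j => by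
      rw [Set.iUnion_inter]; exact MeasurableSet.iUnion fun i => (hB i).2 j⟩

lemma stopSA_le (F : Filtration ℕ m0) (ρ : Ω → ℕ∞) (hρ : IsStop F ρ) :
    stopSA F ρ hρ ≤ m0 := fun _ hs => hs.1

lemma stopSA_mono (F : Filtration ℕ m0) {ρ ρ' : Ω → ℕ∞} (hρ : IsStop F ρ) (hρ' : IsStop F ρ')
    (h : ∀ ω, ρ ω ≤ ρ' ω) : stopSA F ρ hρ ≤ stopSA F ρ' hρ' := by
  rintro B ⟨hB1, hB2⟩
  refine ⟨hB1, fun j => ?_⟩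
  have : B ∩ {ω | ρ' ω ≤ (j : ℕ∞)} =
      (B ∩ {ω | ρ ω ≤ (j : ℕ∞)}) ∩ {ω | ρ' ω ≤ (j : ℕ∞)} := by
    ext ω
    simp only [Set.mem_inter_iff, Set.mem_setOf_eq]
    exact ⟨fun ⟨h1, h2⟩ => ⟨⟨h1, le_trans (h ω) h2⟩, h2⟩, fun ⟨⟨h1, _⟩, h2⟩ => ⟨h1, h2⟩⟩
  rw [this]
  exact (hB2 j).inter (hρ' j)

lemma isStop_min {F : Filtration ℕ m0} {ρ σ : Ω → ℕ∞} (hρ : IsStop F ρ) (hσ : IsStop F σ) :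
    IsStop F (fun ω => min (ρ ω) (σ ω)) := by
  intro n
  have : {ω | min (ρ ω) (σ ω) ≤ (n : ℕ∞)} =
      {ω | ρ ω ≤ (n : ℕ∞)} ∪ {ω | σ ω ≤ (n : ℕ∞)} := by
    ext ω; simp [min_le_iff]
  rw [this]; exact (hρ n).union (hσ n)

lemma isStop_const {F : Filtration ℕ m0} (m : ℕ) : IsStop F (fun _ => (m : ℕ∞)) := by
  intro n
  rcases le_or_gt m n with h | h
  · have : {ω : Ω | ((m : ℕ∞)) ≤ (n : ℕ∞)} = Set.univ := by
      ext ω; simp [Nat.cast_le.mpr h]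
    rw [this]; exact @MeasurableSet.univ _ (F n)
  · have : {ω : Ω | ((m : ℕ∞)) ≤ (n : ℕ∞)} = ∅ := by
      ext ω; simp [Nat.cast_le, Nat.not_le.mpr h]
    rw [this]; exact @MeasurableSet.empty _ (F n)

lemma isStop_add_one {F : Filtration ℕ m0} {σ : Ω → ℕ∞} (hσ : IsStop F σ) :
    IsStop F (fun ω => σ ω + 1) := by
  intro n
  cases n with
  | zero =>
    have : {ω : Ω | σ ω + 1 ≤ ((0 : ℕ) : ℕ∞)} = ∅ := by
      ext ω
      simp only [Set.mem_setOf_eq, Set.mem_empty_iff_false, iff_false, Nat.cast_zero,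
        nonpos_iff_eq_zero]
      intro h
      have h1 : (1 : ℕ∞) ≤ σ ω + 1 := le_add_self
      rw [h] at h1
      exact absurd h1 (by simp)
    rw [this]; exact @MeasurableSet.empty _ (F 0)
  | succ m =>
    have : {ω : Ω | σ ω + 1 ≤ ((m + 1 : ℕ) : ℕ∞)} = {ω | σ ω ≤ (m : ℕ∞)} := by
      ext ω
      have : ((m + 1 : ℕ) : ℕ∞) = (m : ℕ∞) + 1 := by push_cast; rfl
      rw [this]
      simp only [Set.mem_setOf_eq]
      exact ENat.add_le_add_iff_right (by simp)
    rw [this]; exact F.mono (Nat.le_succ m) _ (hσ m)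

lemma stopVal_min_eq_stopProc (ξ : ℕ → Ω → ℤ) (ρ : Ω → ℕ∞) (m : ℕ) (ω : Ω) :
    ((stopVal ξ (fun ω => min (ρ ω) (m : ℕ∞)) ω : ℤ) : ℝ) = stopProc ξ ρ m ω := by
  simp [stopVal, stopProc, min_comm]

lemma measurable_stopSA_stopVal {F : Filtration ℕ m0} (ξ : ℕ → Ω → ℤ)
    (hm : ∀ k, Measurable (ξ k)) {ρ : Ω → ℕ∞} (hρ : IsStop F ρ)
    (hF : ∀ (k n : ℕ), k ≤ n → ∀ s : Set ℤ, MeasurableSet[F n] (walk ξ k ⁻¹' s)) :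
    Measurable[stopSA F ρ hρ] (stopVal ξ ρ) := by
  intro s _
  refine ⟨measurable_stopVal ξ hm hρ .of_discrete, fun j => ?_⟩
  have hset : stopVal ξ ρ ⁻¹' s ∩ {ω | ρ ω ≤ (j : ℕ∞)} =
      ⋃ k ∈ Finset.range (j + 1), ({ω | ρ ω = (k : ℕ∞)} ∩ walk ξ k ⁻¹' s) := by
    ext ω
    simp only [Set.mem_inter_iff, Set.mem_preimage, Set.mem_setOf_eq, Set.mem_iUnion,
      Finset.mem_range]
    constructor
    · rintro ⟨hs, hle⟩
      have hne : ρ ω ≠ ⊤ := by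
        intro h; rw [h] at hle; exact absurd hle (by simp)
      change walk ξ (ρ ω).toNat ω ∈ s at hs
      lift ρ ω to ℕ using hne with k hk
      exact ⟨k, Nat.lt_succ_of_le (by exact_mod_cast hle), rfl, by simpa using hs⟩
    · rintro ⟨k, hkj, hk, hks⟩
      refine ⟨by simpa [stopVal, hk] using hks, ?_⟩
      rw [hk]
      exact_mod_cast Nat.lt_succ_iff.mp hkj
  rw [hset]
  exact MeasurableSet.biUnion (Finset.range (j + 1)).countable_toSet fun k hk =>
    ((hρ.lvl (Nat.lt_succ_iff.mp (Finset.mem_range.mp hk))).inter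
      (hF k j (Nat.lt_succ_iff.mp (Finset.mem_range.mp hk)) s))

end Aux2
section Aux3

variable {Ω : Type*} [m0 : MeasurableSpace Ω]

lemma stopProc_zero (ξ : ℕ → Ω → ℤ) (ρ : Ω → ℕ∞) (ω : Ω) : stopProc ξ ρ 0 ω = 0 := by
  simp [stopProc, walk_zero]

lemma stopProc_succ (ξ : ℕ → Ω → ℤ) (ρ : Ω → ℕ∞) (j : ℕ) (ω : Ω) :
    stopProc ξ ρ (j + 1) ω =
      stopProc ξ ρ j ω + if ((j : ℕ∞) < ρ ω) then (ξ (j + 1) ω : ℝ) else 0 := by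
  rcases le_or_gt (ρ ω) (j : ℕ∞) with h | h
  · rw [if_neg (not_lt.mpr h)]
    have h1 : min ((j : ℕ∞)) (ρ ω) = ρ ω := min_eq_right h
    have h2 : min (((j + 1 : ℕ)) : ℕ∞) (ρ ω) = ρ ω :=
      min_eq_right (h.trans (by exact_mod_cast Nat.cast_le.mpr (Nat.le_succ j)))
    simp only [stopProc]
    rw [h2, h1, add_zero]
  · rw [if_pos h]
    have h1 : min ((j : ℕ∞)) (ρ ω) = (j : ℕ∞) := min_eq_left h.le
    have h2 : min (((j + 1 : ℕ)) : ℕ∞) (ρ ω) = ((j + 1 : ℕ) : ℕ∞) := by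
      refine min_eq_left ?_
      have : ((j : ℕ∞)) + 1 ≤ ρ ω := ENat.add_one_le_iff (by simp) |>.mpr h
      simpa [Nat.cast_add, Nat.cast_one] using this
    simp only [stopProc, h1, h2, ENat.toNat_coe]
    rw [walk_succ]
    push_cast
    ring

lemma stopProc_eq_stopVal_of_le {ξ : ℕ → Ω → ℤ} {ρ : Ω → ℕ∞} {n : ℕ} {ω : Ω}
    (h : ρ ω ≤ (n : ℕ∞)) : stopProc ξ ρ n ω = ((stopVal ξ ρ ω : ℤ) : ℝ) := by
  simp [stopProc, stopVal, min_eq_right h]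

lemma measurable_stopProc {F : Filtration ℕ m0} (ξ : ℕ → Ω → ℤ) (hm : ∀ k, Measurable (ξ k))
    {ρ : Ω → ℕ∞} (hρ : IsStop F ρ) (n : ℕ) : Measurable (stopProc ξ ρ n) := by
  have : stopProc ξ ρ n = fun ω =>
      ((stopVal ξ (fun ω => min (ρ ω) ((n : ℕ∞))) ω : ℤ) : ℝ) := by
    funext ω; rw [stopVal_min_eq_stopProc]
  rw [this]
  exact measurable_from_top.comp (measurable_stopVal ξ hm (isStop_min hρ (isStop_const n)))

lemma integrable_xi {P : Measure Ω} {ξ : ℕ → Ω → ℤ} [IsFiniteMeasure P]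
    (hm : ∀ k, Measurable (ξ k)) (hpm : ∀ᵐ ω ∂P, ∀ k, ξ k ω = 1 ∨ ξ k ω = -1) (k : ℕ) :
    Integrable (fun ω => (ξ k ω : ℝ)) P := by
  refine Integrable.mono' (integrable_const (1 : ℝ))
    (measurable_from_top.comp (hm k)).aestronglyMeasurable ?_
  filter_upwards [hpm] with ω h
  rcases h k with h' | h' <;> simp [h']

lemma integrable_stopProc {P : Measure Ω} {ξ : ℕ → Ω → ℤ} [IsFiniteMeasure P]
    {F : Filtration ℕ m0} (hm : ∀ k, Measurable (ξ k))
    (hpm : ∀ᵐ ω ∂P, ∀ k, ξ k ω = 1 ∨ ξ k ω = -1)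
    {ρ : Ω → ℕ∞} (hρ : IsStop F ρ) (n : ℕ) : Integrable (stopProc ξ ρ n) P := by
  refine Integrable.mono' (integrable_const ((n : ℝ)))
    (measurable_stopProc ξ hm hρ n).aestronglyMeasurable ?_
  filter_upwards [hpm] with ω h
  have h1 : |walk ξ (min ((n : ℕ∞)) (ρ ω)).toNat ω| ≤ ((min ((n : ℕ∞)) (ρ ω)).toNat : ℤ) :=
    abs_walk_le h _
  have h2 : (min ((n : ℕ∞)) (ρ ω)).toNat ≤ n := by
    have := ENat.toNat_le_toNat (min_le_left ((n : ℕ∞)) (ρ ω)) (by simp)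
    simpa using this
  rw [stopProc, Real.norm_eq_abs, ← Int.cast_abs]
  calc ((|walk ξ (min ((n : ℕ∞)) (ρ ω)).toNat ω| : ℤ) : ℝ) ≤ ((min ((n : ℕ∞)) (ρ ω)).toNat : ℝ) := by
        exact_mod_cast h1
    _ ≤ (n : ℝ) := by exact_mod_cast h2

end Aux3
section Aux4

variable {Ω : Type*} [m0 : MeasurableSpace Ω]

/-- The stopped value, as a real-valued function. -/
def stopValR (ξ : ℕ → Ω → ℤ) (ρ : Ω → ℕ∞) (ω : Ω) : ℝ := ((stopVal ξ ρ ω : ℤ) : ℝ)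

lemma ae_tendsto_stopProc {P : Measure Ω} {ξ : ℕ → Ω → ℤ} {τ : Ω → ℕ∞}
    (hfin : AEFinite P τ) :
    ∀ᵐ ω ∂P, Tendsto (fun n => stopProc ξ τ n ω) atTop (𝓝 (stopValR ξ τ ω)) := by
  filter_upwards [hfin] with ω hω
  have hne : τ ω ≠ ⊤ := hω.ne
  lift τ ω to ℕ using hne with k hk
  refine tendsto_atTop_of_eventually_const (i₀ := k) fun n hn => ?_
  exact stopProc_eq_stopVal_of_le (by rw [← hk]; exact_mod_cast hn)

lemma integrable_stopValR_tau {P : Measure Ω} {ξ : ℕ → Ω → ℤ} (W : IsSSRW P ξ)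
    {τ : Ω → ℕ∞} (hτ : IsUIStop P ξ W.meas τ) :
    Integrable (stopValR ξ τ) P ∧
      ∀ n, stopProc ξ τ n =ᵐ[P]
        P[stopValR ξ τ | (natFilt ξ W.meas) n] := by
  haveI := W.isProb
  obtain ⟨hstop, hfin, hmart, hui⟩ := hτ
  set F := natFilt ξ W.meas
  obtain ⟨R, hR⟩ := hui.2.2
  have hmeas : ∀ n, AEStronglyMeasurable (stopProc ξ τ n) P := fun n => hui.1 n
  have hlim1 : ∀ᵐ ω ∂P,
      Tendsto (fun n => stopProc ξ τ n ω) atTop (𝓝 (F.limitProcess (stopProc ξ τ) P ω)) :=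
    hmart.submartingale.ae_tendsto_limitProcess hR
  have hZlim : stopValR ξ τ =ᵐ[P] F.limitProcess (stopProc ξ τ) P := by
    filter_upwards [hlim1, ae_tendsto_stopProc hfin] with ω h1 h2
    exact tendsto_nhds_unique h2 h1
  have hZint : Integrable (stopValR ξ τ) P := by
    have := (Filtration.memLp_limitProcess_of_eLpNorm_bdd (ℱ := F) hmeas hR)
    exact (memLp_one_iff_integrable.mp this).congr hZlim.symm
  refine ⟨hZint, fun n => ?_⟩
  have htends : Tendsto (fun n => eLpNorm (stopProc ξ τ n - stopValR ξ τ) 1 P) atTop (𝓝 0) := by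
    have h0 := hmart.submartingale.tendsto_eLpNorm_one_limitProcess hui
    refine h0.congr fun n => ?_
    exact (eLpNorm_congr_ae (EventuallyEq.sub (EventuallyEq.refl _ _) hZlim.symm)).symm ▸ rfl
  exact hmart.eq_condExp_of_tendsto_eLpNorm hZint htends n

end Aux4
section Aux5

variable {Ω : Type*} [m0 : MeasurableSpace Ω]

lemma setIntegral_stopProc_eq {P : Measure Ω} {ξ : ℕ → Ω → ℤ} (W : IsSSRW P ξ)
    {τ ρ : Ω → ℕ∞} (hτs : IsStop (natFilt ξ W.meas) τ)
    (hmart : Martingale (stopProc ξ τ) (natFilt ξ W.meas) P)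
    (hρ : IsStop (natFilt ξ W.meas) ρ) (hρτ : ∀ ω, ρ ω ≤ τ ω)
    (m : ℕ) {B : Set Ω} (hB : MeasurableSet B)
    (hBj : ∀ j, j < m → MeasurableSet[natFilt ξ W.meas j] (B ∩ {ω | ρ ω ≤ (j : ℕ∞)})) :
    ∫ ω in B, stopProc ξ ρ m ω ∂P = ∫ ω in B, stopProc ξ τ m ω ∂P := by
  haveI := W.isProb
  set F := natFilt ξ W.meas with hF
  have hpm := W.ae_pm
  induction m with
  | zero => simp [stopProc_zero]
  | succ m ih =>
    have ihm : ∫ ω in B, stopProc ξ ρ m ω ∂P = ∫ ω in B, stopProc ξ τ m ω ∂P :=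
      ih (fun j hj => hBj j (Nat.lt_succ_of_lt hj))
    -- increments
    set g : (Ω → ℕ∞) → Ω → ℝ := fun θ ω => if ((m : ℕ∞)) < θ ω then (ξ (m + 1) ω : ℝ) else 0
      with hg
    have hgind : ∀ (θ : Ω → ℕ∞),
        g θ = Set.indicator {ω | (m : ℕ∞) < θ ω} (fun ω => (ξ (m + 1) ω : ℝ)) := by
      intro θ; funext ω
      by_cases h : ((m : ℕ∞)) < θ ω <;> simp [hg, h, Set.indicator_apply]
    have hlt_meas : ∀ (θ : Ω → ℕ∞), IsStop F θ → MeasurableSet[F m] {ω | (m : ℕ∞) < θ ω} := by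
      intro θ hθ
      have : {ω | (m : ℕ∞) < θ ω} = {ω | θ ω ≤ (m : ℕ∞)}ᶜ := by ext ω; simp
      rw [this]; exact (hθ m).compl
    have hgint : ∀ (θ : Ω → ℕ∞), IsStop F θ → Integrable (g θ) P := by
      intro θ hθ
      rw [hgind]
      exact (integrable_xi W.meas hpm (m + 1)).indicator (F.le m _ (hlt_meas θ hθ))
    have hsplit : ∀ (θ : Ω → ℕ∞), IsStop F θ →
        ∫ ω in B, stopProc ξ θ (m + 1) ω ∂P
          = ∫ ω in B, stopProc ξ θ m ω ∂P + ∫ ω in B, g θ ω ∂P := by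
      intro θ hθ
      rw [← integral_add ((integrable_stopProc W.meas hpm hθ m).integrableOn)
        ((hgint θ hθ).integrableOn)]
      refine setIntegral_congr_fun hB fun ω _ => ?_
      exact stopProc_succ ξ θ m ω
    rw [hsplit τ hτs, hsplit ρ hρ, ihm]
    congr 1
    -- remains: ∫_B g ρ = ∫_B g τ
    have hdiff : ∀ ω, g τ ω - g ρ ω =
        Set.indicator ({ω | ρ ω ≤ (m : ℕ∞)} ∩ {ω | (m : ℕ∞) < τ ω})
          (fun ω => (ξ (m + 1) ω : ℝ)) ω := by
      intro ω
      rcases le_or_gt (ρ ω) ((m : ℕ∞)) with h | h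
      · have hg0 : g ρ ω = 0 := by simp [hg, not_lt.mpr h]
        by_cases h2 : ((m : ℕ∞)) < τ ω
        · rw [hg0]; simp [hg, h2, Set.indicator_apply, h]
        · have hgt : g τ ω = 0 := by simp [hg, h2]
          rw [hg0, hgt]
          simp [Set.indicator_apply, h2]
      · have h2 : ((m : ℕ∞)) < τ ω := lt_of_lt_of_le h (hρτ ω)
        have : Set.indicator ({ω | ρ ω ≤ (m : ℕ∞)} ∩ {ω | (m : ℕ∞) < τ ω})
            (fun ω => (ξ (m + 1) ω : ℝ)) ω = 0 := by
          simp [Set.indicator_apply, not_le.mpr h]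
        rw [this, hg]
        simp [h, h2]
    have hC : MeasurableSet[F m] ((B ∩ {ω | ρ ω ≤ (m : ℕ∞)}) ∩ {ω | (m : ℕ∞) < τ ω}) := by
      exact (hBj m (Nat.lt_succ_self m)).inter (hlt_meas τ hτs)
    have hCm : MeasurableSet ((B ∩ {ω | ρ ω ≤ (m : ℕ∞)}) ∩ {ω | (m : ℕ∞) < τ ω}) :=
      F.le m _ hC
    have key : ∫ ω in B, (g τ ω - g ρ ω) ∂P = 0 := by
      have h1 : ∫ ω in B, (g τ ω - g ρ ω) ∂P
          = ∫ ω in (B ∩ ({ω | ρ ω ≤ (m : ℕ∞)} ∩ {ω | (m : ℕ∞) < τ ω})),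
              (ξ (m + 1) ω : ℝ) ∂P := by
        rw [← setIntegral_indicator
          (((F.le m _ (hρ m)).inter (F.le m _ (hlt_meas τ hτs))) :
          MeasurableSet ({ω | ρ ω ≤ (m : ℕ∞)} ∩ {ω | (m : ℕ∞) < τ ω}))]
        exact setIntegral_congr_fun hB fun ω _ => hdiff ω
      rw [h1, ← Set.inter_assoc]
      -- this equals ∫_C (M (m+1) - M m) = 0 by the martingale property
      have h2 : ∫ ω in ((B ∩ {ω | ρ ω ≤ (m : ℕ∞)}) ∩ {ω | (m : ℕ∞) < τ ω}),
          (ξ (m + 1) ω : ℝ) ∂P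
          = ∫ ω in ((B ∩ {ω | ρ ω ≤ (m : ℕ∞)}) ∩ {ω | (m : ℕ∞) < τ ω}),
              (stopProc ξ τ (m + 1) ω - stopProc ξ τ m ω) ∂P := by
        refine setIntegral_congr_fun hCm fun ω hω => ?_
        have hlt : ((m : ℕ∞)) < τ ω := hω.2
        rw [stopProc_succ, if_pos hlt]; ring
      rw [h2]
      rw [integral_sub ((integrable_stopProc W.meas hpm hτs (m + 1)).integrableOn)
        ((integrable_stopProc W.meas hpm hτs m).integrableOn)]
      rw [sub_eq_zero]
      exact (hmart.setIntegral_eq (Nat.le_succ m) hC).symm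
    have := integral_sub ((hgint τ hτs).integrableOn (s := B)) ((hgint ρ hρ).integrableOn (s := B))
    rw [← sub_eq_zero]
    rw [key] at this
    linarith [this.symm]

end Aux5
section Aux6

variable {Ω : Type*} [m0 : MeasurableSpace Ω]

lemma aefinite_of_le {P : Measure Ω} {ρ τ : Ω → ℕ∞} (hfin : AEFinite P τ)
    (h : ∀ ω, ρ ω ≤ τ ω) : AEFinite P ρ := by
  filter_upwards [hfin] with ω hω
  exact lt_of_le_of_lt (h ω) hω

lemma aesm'_stopVal {P : Measure Ω} {ξ : ℕ → Ω → ℤ} (hm : ∀ k, Measurable (ξ k))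
    {ρ : Ω → ℕ∞} (hρ : IsStop (natFilt ξ hm) ρ) :
    AEStronglyMeasurable[stopSA (natFilt ξ hm) ρ hρ] (stopValR ξ ρ) P := by
  refine StronglyMeasurable.aestronglyMeasurable ?_
  refine Measurable.stronglyMeasurable ?_
  exact measurable_from_top.comp
    (measurable_stopSA_stopVal ξ hm hρ fun k n hkn s => walk_mem_natFilt ξ hm hkn s)

/-- Optional sampling: the value at a stopping time `ρ ≤ τ` is the conditional expectation
of the terminal value with respect to the σ-algebra of the past up to `ρ`. -/
lemma condexp_stopVal {P : Measure Ω} {ξ : ℕ → Ω → ℤ} (W : IsSSRW P ξ) {τ : Ω → ℕ∞}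
    (hτ : IsUIStop P ξ W.meas τ) {ρ : Ω → ℕ∞} (hρ : IsStop (natFilt ξ W.meas) ρ)
    (hρτ : ∀ ω, ρ ω ≤ τ ω) :
    Integrable (stopValR ξ ρ) P ∧
      stopValR ξ ρ =ᵐ[P] P[stopValR ξ τ | stopSA (natFilt ξ W.meas) ρ hρ] := by
  haveI := W.isProb
  set F := natFilt ξ W.meas with hFdef
  obtain ⟨hZint, hMcx⟩ := integrable_stopValR_tau W hτ
  have hpm := W.ae_pm
  obtain ⟨hτstop, hτfin, hmart, hui⟩ := hτ
  have hρfin : AEFinite P ρ := aefinite_of_le hτfin hρτ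
  -- step (a): the truncated optional sampling identity
  have hstep_a : ∀ m : ℕ, stopProc ξ ρ m =ᵐ[P]
      P[stopValR ξ τ | stopSA F (fun ω => min (ρ ω) ((m : ℕ∞)))
        (isStop_min hρ (isStop_const m))] := by
    intro m
    set ρm := fun ω => min (ρ ω) ((m : ℕ∞)) with hρm
    have hρms : IsStop F ρm := isStop_min hρ (isStop_const m)
    refine ae_eq_condExp_of_forall_setIntegral_eq (stopSA_le F ρm hρms) hZint
      (fun s _ _ => (integrable_stopProc W.meas hpm hρ m).integrableOn)
      (fun s hs _ => ?_) ?_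
    · obtain ⟨hs1, hs2⟩ := hs
      have hsFm : MeasurableSet[F m] s := by
        have : s ∩ {ω | ρm ω ≤ ((m : ℕ∞))} = s := by
          exact Set.inter_eq_left.mpr fun ω _ => min_le_right (ρ ω) ((m : ℕ∞))
        rw [← this]; exact hs2 m
      have hBj : ∀ j, j < m → MeasurableSet[F j] (s ∩ {ω | ρ ω ≤ (j : ℕ∞)}) := by
        intro j hj
        have : s ∩ {ω | ρ ω ≤ (j : ℕ∞)} = s ∩ {ω | ρm ω ≤ (j : ℕ∞)} := by
          ext ω
          simp only [Set.mem_inter_iff, Set.mem_setOf_eq, hρm, min_le_iff]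
          have : ¬ ((m : ℕ∞) ≤ (j : ℕ∞)) := by
            rw [Nat.cast_le]; omega
          tauto
        rw [this]; exact hs2 j
      have e1 : ∫ ω in s, stopProc ξ ρ m ω ∂P = ∫ ω in s, stopProc ξ τ m ω ∂P :=
        setIntegral_stopProc_eq W hτstop hmart hρ hρτ m hs1 hBj
      have e2 : ∫ ω in s, stopProc ξ τ m ω ∂P = ∫ ω in s, stopValR ξ τ ω ∂P := by
        rw [setIntegral_congr_ae hs1 ((hMcx m).mono fun ω h _ => h)]
        exact setIntegral_condExp (F.le m) hZint hsFm
      rw [e1, e2]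
    · have : stopProc ξ ρ m = stopValR ξ ρm := by
        funext ω; rw [← stopVal_min_eq_stopProc]; rfl
      rw [this]
      exact aesm'_stopVal W.meas hρms
  -- step (b): integrability of the stopped value
  have hbound : ∀ m : ℕ, eLpNorm (stopProc ξ ρ m) 1 P ≤ eLpNorm (stopValR ξ τ) 1 P := by
    intro m
    rw [eLpNorm_congr_ae (hstep_a m)]
    exact eLpNorm_one_condExp_le_eLpNorm _
  have htendρ : ∀ᵐ ω ∂P, Tendsto (fun n => stopProc ξ ρ n ω) atTop (𝓝 (stopValR ξ ρ ω)) :=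
    ae_tendsto_stopProc hρfin
  have hYint : Integrable (stopValR ξ ρ) P := by
    constructor
    · exact (measurable_from_top.comp (measurable_stopVal ξ W.meas hρ)).aestronglyMeasurable
    · rw [HasFiniteIntegral]
      have h1 : ∫⁻ ω, (‖stopValR ξ ρ ω‖₊ : ℝ≥0∞) ∂P =
          ∫⁻ ω, Filter.liminf (fun m => (‖stopProc ξ ρ m ω‖₊ : ℝ≥0∞)) atTop ∂P := by
        refine lintegral_congr_ae ?_
        filter_upwards [htendρ] with ω hω
        exact (Filter.Tendsto.liminf_eq (ENNReal.tendsto_coe.mpr hω.nnnorm)).symm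
      have h2 : ∫⁻ ω, Filter.liminf (fun m => (‖stopProc ξ ρ m ω‖₊ : ℝ≥0∞)) atTop ∂P ≤
          Filter.liminf (fun m => ∫⁻ ω, (‖stopProc ξ ρ m ω‖₊ : ℝ≥0∞) ∂P) atTop :=
        lintegral_liminf_le fun m =>
          ((measurable_stopProc ξ W.meas hρ m).nnnorm).coe_nnreal_ennreal
      have h3 : Filter.liminf (fun m => ∫⁻ ω, (‖stopProc ξ ρ m ω‖₊ : ℝ≥0∞) ∂P) atTop ≤
          eLpNorm (stopValR ξ τ) 1 P := by
        have h4 := Filter.liminf_le_liminf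
          (u := fun m : ℕ => ∫⁻ ω, (‖stopProc ξ ρ m ω‖₊ : ℝ≥0∞) ∂P)
          (v := fun _ : ℕ => eLpNorm (stopValR ξ τ) 1 P) (f := atTop)
          (Filter.Eventually.of_forall fun m => by
            simpa only [eLpNorm_one_eq_lintegral_enorm, enorm_eq_nnnorm] using hbound m)
        simpa [Filter.liminf_const] using h4
      calc ∫⁻ ω, (‖stopValR ξ ρ ω‖₊ : ℝ≥0∞) ∂P ≤ eLpNorm (stopValR ξ τ) 1 P := by
            rw [h1]; exact le_trans h2 h3
        _ < ⊤ := by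
            rw [eLpNorm_one_eq_lintegral_enorm]
            exact hZint.2
  refine ⟨hYint, ?_⟩
  -- step (c): the optional sampling identity at ρ
  refine ae_eq_condExp_of_forall_setIntegral_eq (stopSA_le F ρ hρ) hZint
    (fun s _ _ => hYint.integrableOn) (fun s hs _ => ?_) (aesm'_stopVal W.meas hρ)
  obtain ⟨hs1, hs2⟩ := hs
  set sn := fun n : ℕ => s ∩ {ω | ρ ω ≤ (n : ℕ∞)} with hsn
  have hsnm : ∀ n, MeasurableSet (sn n) := fun n => F.le n _ (hs2 n)
  have hmono : Monotone sn := by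
    intro a b hab
    exact Set.inter_subset_inter_right s fun ω (hω : ρ ω ≤ (a : ℕ∞)) =>
      le_trans hω (Nat.cast_le.mpr hab)
  have hseq : ∀ n, ∫ ω in sn n, stopValR ξ ρ ω ∂P = ∫ ω in sn n, stopValR ξ τ ω ∂P := by
    intro n
    have e1 : ∫ ω in sn n, stopValR ξ ρ ω ∂P = ∫ ω in sn n, stopProc ξ ρ n ω ∂P := by
      refine setIntegral_congr_fun (hsnm n) fun ω hω => ?_
      exact (stopProc_eq_stopVal_of_le hω.2).symm
    have hBj : ∀ j, j < n → MeasurableSet[F j] (sn n ∩ {ω | ρ ω ≤ (j : ℕ∞)}) := by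
      intro j hj
      have : sn n ∩ {ω | ρ ω ≤ (j : ℕ∞)} = s ∩ {ω | ρ ω ≤ (j : ℕ∞)} := by
        rw [hsn, Set.inter_assoc]
        congr 1
        exact Set.inter_eq_right.mpr fun ω (hω : ρ ω ≤ (j : ℕ∞)) =>
          le_trans hω (Nat.cast_le.mpr hj.le)
      rw [this]; exact hs2 j
    have e2 : ∫ ω in sn n, stopProc ξ ρ n ω ∂P = ∫ ω in sn n, stopProc ξ τ n ω ∂P :=
      setIntegral_stopProc_eq W hτstop hmart hρ hρτ n (hsnm n) hBj
    have e3 : ∫ ω in sn n, stopProc ξ τ n ω ∂P = ∫ ω in sn n, stopValR ξ τ ω ∂P := by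
      rw [setIntegral_congr_ae (hsnm n) ((hMcx n).mono fun ω h _ => h)]
      exact setIntegral_condExp (F.le n) hZint (hs2 n)
    rw [e1, e2, e3]
  -- take limits
  have hU : s =ᵐ[P] ⋃ n, sn n := by
    have hnull : P {ω | ρ ω = ⊤} = 0 := by
      rw [AEFinite] at hρfin
      have := hρfin
      rw [ae_iff] at this
      convert this using 2
      ext ω; simp [lt_top_iff_ne_top]
    have hsub : s \ (⋃ n, sn n) ⊆ {ω | ρ ω = ⊤} := by
      rintro ω ⟨hωs, hωu⟩
      simp only [Set.mem_iUnion, hsn, Set.mem_inter_iff, Set.mem_setOf_eq, not_exists] at hωu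
      by_contra h
      lift ρ ω to ℕ using h with k hk
      exact hωu k ⟨hωs, le_refl _⟩
    have hsub2 : (⋃ n, sn n) \ s = ∅ := by
      refine Set.eq_empty_of_subset_empty fun ω hω => ?_
      obtain ⟨hω1, hω2⟩ := hω
      simp only [Set.mem_iUnion, hsn, Set.mem_inter_iff] at hω1
      obtain ⟨n, hn, _⟩ := hω1
      exact hω2 hn
    rw [Filter.eventuallyEq_set]
    have h1 : P (s \ ⋃ n, sn n) = 0 := measure_mono_null hsub hnull
    have h2 : P ((⋃ n, sn n) \ s) = 0 := by rw [hsub2]; exact measure_empty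
    filter_upwards [measure_eq_zero_iff_ae_notMem.mp h1, measure_eq_zero_iff_ae_notMem.mp h2] with ω hω1 hω2
    constructor
    · intro hωs
      by_contra hωu
      exact hω1 ⟨hωs, hωu⟩
    · intro hωu
      by_contra hωs
      exact hω2 ⟨hωu, hωs⟩
  have hl1 : Tendsto (fun n => ∫ ω in sn n, stopValR ξ ρ ω ∂P) atTop
      (𝓝 (∫ ω in ⋃ n, sn n, stopValR ξ ρ ω ∂P)) :=
    tendsto_setIntegral_of_monotone hsnm hmono hYint.integrableOn
  have hl2 : Tendsto (fun n => ∫ ω in sn n, stopValR ξ τ ω ∂P) atTop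
      (𝓝 (∫ ω in ⋃ n, sn n, stopValR ξ τ ω ∂P)) :=
    tendsto_setIntegral_of_monotone hsnm hmono hZint.integrableOn
  have := tendsto_nhds_unique (hl1.congr fun n => hseq n) hl2
  rw [setIntegral_congr_set hU, setIntegral_congr_set hU, this]
end Aux6
section Aux7

variable {Ω : Type*} [m0 : MeasurableSpace Ω]

lemma measurable_stopSA_stopVal' {ξ : ℕ → Ω → ℤ} (hm : ∀ k, Measurable (ξ k))
    {ρ : Ω → ℕ∞} (hρ : IsStop (natFilt ξ hm) ρ) :
    Measurable[stopSA (natFilt ξ hm) ρ hρ] (stopVal ξ ρ) :=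
  measurable_stopSA_stopVal ξ hm hρ fun _ _ hkn s => walk_mem_natFilt ξ hm hkn s

/-- If `σ ≤ τ` pointwise and `X_σ` has the same law as `X_τ`, then `X_σ = X_τ` a.s. -/
lemma stopValR_ae_eq_of_law_eq {P : Measure Ω} {ξ : ℕ → Ω → ℤ} (W : IsSSRW P ξ)
    {τ : Ω → ℕ∞} (hτ : IsUIStop P ξ W.meas τ) {σ : Ω → ℕ∞}
    (hσ : IsStop (natFilt ξ W.meas) σ) (hστ : ∀ ω, σ ω ≤ τ ω)
    (hlaw : Measure.map (stopVal ξ σ) P = Measure.map (stopVal ξ τ) P) :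
    stopValR ξ σ =ᵐ[P] stopValR ξ τ := by
  haveI := W.isProb
  set F := natFilt ξ W.meas with hFdef
  obtain ⟨hYint, hYcx⟩ := condexp_stopVal W hτ hσ hστ
  obtain ⟨hZint, -⟩ := integrable_stopValR_tau W hτ
  have hG : stopSA F σ hσ ≤ m0 := stopSA_le F σ hσ
  have key : ∀ a : ℤ, ∀ᵐ ω ∂P, stopVal ξ σ ω = a → stopValR ξ τ ω = (a : ℝ) := by
    intro a
    set h : Ω → ℝ := fun ω => |stopValR ξ σ ω - (a : ℝ)| with hh
    set f : Ω → ℝ := fun ω => |stopValR ξ τ ω - (a : ℝ)| with hf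
    have hfint : Integrable f P := (hZint.sub (integrable_const _)).abs
    have hhint : Integrable h P := (hYint.sub (integrable_const _)).abs
    have hsubint : Integrable (fun ω => stopValR ξ τ ω - (a : ℝ)) P :=
      hZint.sub (integrable_const _)
    -- h ≤ᵐ E[f | stopSA F σ hσ]
    have h1 : P[stopValR ξ τ - (fun _ => (a : ℝ)) | stopSA F σ hσ] =ᵐ[P]
        P[stopValR ξ τ | stopSA F σ hσ] - P[(fun _ => (a : ℝ)) | stopSA F σ hσ] :=
      condExp_sub hZint (integrable_const _) _
    have h2 : P[(fun _ : Ω => (a : ℝ)) | stopSA F σ hσ] = fun _ => (a : ℝ) := condExp_const hG _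
    have hsub : (fun ω => stopValR ξ σ ω - (a : ℝ)) =ᵐ[P]
        P[fun ω => stopValR ξ τ ω - (a : ℝ) | stopSA F σ hσ] := by
      have hfs : (fun ω => stopValR ξ τ ω - (a : ℝ)) = stopValR ξ τ - (fun _ => (a : ℝ)) := rfl
      rw [hfs]
      filter_upwards [h1, hYcx] with ω e1 e3
      rw [e1]
      simp only [Pi.sub_apply, h2]
      rw [← e3]
    have hmono1 : P[fun ω => stopValR ξ τ ω - (a : ℝ) | stopSA F σ hσ] ≤ᵐ[P] P[f | stopSA F σ hσ] :=
      condExp_mono hsubint hfint (Filter.Eventually.of_forall fun ω => le_abs_self _)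
    have hmono2 : P[fun ω => -(stopValR ξ τ ω - (a : ℝ)) | stopSA F σ hσ] ≤ᵐ[P] P[f | stopSA F σ hσ] :=
      condExp_mono hsubint.neg hfint (Filter.Eventually.of_forall fun ω => neg_le_abs _)
    have hneg : P[fun ω => -(stopValR ξ τ ω - (a : ℝ)) | stopSA F σ hσ] =ᵐ[P]
        -P[fun ω => stopValR ξ τ ω - (a : ℝ) | stopSA F σ hσ] := by
      have he : (fun ω => -(stopValR ξ τ ω - (a : ℝ)))
          = -(fun ω => stopValR ξ τ ω - (a : ℝ)) := rfl
      rw [he]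
      exact condExp_neg _ _
    have hle : h ≤ᵐ[P] P[f | stopSA F σ hσ] := by
      filter_upwards [hsub, hmono1, hmono2, hneg] with ω e1 e2 e3 e4
      show |stopValR ξ σ ω - (a : ℝ)| ≤ (P[f | stopSA F σ hσ]) ω
      rw [e1]
      refine abs_le.mpr ⟨neg_le.mp ?_, e2⟩
      rw [← Pi.neg_apply, ← e4]
      exact e3
    -- equal integrals from equal laws
    have hIeq : ∫ ω, h ω ∂P = ∫ ω, f ω ∂P := by
      have hms : Measurable (stopVal ξ σ) := measurable_stopVal ξ W.meas hσ
      have hmt : Measurable (stopVal ξ τ) := measurable_stopVal ξ W.meas hτ.1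
      have e1 : ∫ ω, h ω ∂P
          = ∫ z : ℤ, |((z : ℝ)) - (a : ℝ)| ∂(Measure.map (stopVal ξ σ) P) := by
        rw [integral_map hms.aemeasurable measurable_from_top.aestronglyMeasurable]
        rfl
      have e2 : ∫ ω, f ω ∂P
          = ∫ z : ℤ, |((z : ℝ)) - (a : ℝ)| ∂(Measure.map (stopVal ξ τ) P) := by
        rw [integral_map hmt.aemeasurable measurable_from_top.aestronglyMeasurable]
        rfl
      rw [e1, e2, hlaw]
    -- equality case
    have hEf : ∫ ω, (P[f | stopSA F σ hσ]) ω ∂P = ∫ ω, f ω ∂P := integral_condExp hG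
    have hzero : ∫ ω, ((P[f | stopSA F σ hσ]) ω - h ω) ∂P = 0 := by
      rw [integral_sub integrable_condExp hhint, hEf, hIeq, sub_self]
    have hnn : 0 ≤ᵐ[P] (P[f | stopSA F σ hσ] - h) := by
      filter_upwards [hle] with ω hω
      simp only [Pi.sub_apply, Pi.zero_apply]
      linarith [hω]
    have haeeq : (P[f | stopSA F σ hσ] - h) =ᵐ[P] 0 :=
      (integral_eq_zero_iff_of_nonneg_ae hnn (integrable_condExp.sub hhint)).mp hzero
    have hfh : P[f | stopSA F σ hσ] =ᵐ[P] h := by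
      filter_upwards [haeeq] with ω hω
      have h3 : (P[f | stopSA F σ hσ]) ω - h ω = 0 := hω
      linarith [h3]
    -- restrict to the set {stopVal σ = a}
    set A : Set Ω := stopVal ξ σ ⁻¹' {a} with hA
    have hAG : MeasurableSet[stopSA F σ hσ] A := measurable_stopSA_stopVal' W.meas hσ (.of_discrete)
    have hAm : MeasurableSet A := hG _ hAG
    have hint1 : ∫ ω in A, f ω ∂P = ∫ ω in A, (P[f | stopSA F σ hσ]) ω ∂P :=
      (setIntegral_condExp hG hfint hAG).symm
    have hint2 : ∫ ω in A, (P[f | stopSA F σ hσ]) ω ∂P = ∫ ω in A, h ω ∂P :=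
      setIntegral_congr_ae hAm (hfh.mono fun ω hω _ => hω)
    have hint3 : ∫ ω in A, h ω ∂P = 0 := by
      rw [setIntegral_congr_fun (f := h) (g := fun _ => 0) hAm ?_]
      · simp
      · intro ω hω
        have hωa : stopVal ξ σ ω = a := hω
        show |stopValR ξ σ ω - (a : ℝ)| = 0
        rw [stopValR, hωa]
        simp
    have hfA : ∫ ω in A, f ω ∂P = 0 := by rw [hint1, hint2, hint3]
    have hres : f =ᵐ[P.restrict A] 0 := by
      rw [← integral_eq_zero_iff_of_nonneg_ae
        (Filter.Eventually.of_forall fun ω => abs_nonneg _) hfint.integrableOn]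
      exact hfA
    have hres2 := (ae_restrict_iff' hAm).mp hres
    filter_upwards [hres2] with ω hω hωa
    have h0 : |stopValR ξ τ ω - (a : ℝ)| = 0 := hω hωa
    have h4 := abs_eq_zero.mp h0
    linarith [h4]
  filter_upwards [ae_all_iff.mpr key] with ω hω
  exact (hω (stopVal ξ σ ω) rfl).symm

end Aux7
/-- Any UI stopping time of the natural filtration of the simple
symmetric random walk is minimal. -/
theorem minimal_of_uiStop
    {Ω : Type*} [MeasurableSpace Ω] (P : Measure Ω) (ξ : ℕ → Ω → ℤ)
    (W : IsSSRW P ξ) (τ : Ω → ℕ∞) (hτ : IsUIStop P ξ W.meas τ) :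
    Minimal P ξ W.meas τ := by
  intro σ hσ hστae hlaw
  haveI := W.isProb
  classical
  -- replace σ by σ' = min σ τ, which is ≤ τ pointwise
  set σ' : Ω → ℕ∞ := fun ω => min (σ ω) (τ ω) with hσ'def
  have hσ's : IsStop (natFilt ξ W.meas) σ' := isStop_min hσ hτ.1
  have hσ'τ : ∀ ω, σ' ω ≤ τ ω := fun ω => min_le_right _ _
  have hσσ' : σ' =ᵐ[P] σ := by
    filter_upwards [hστae] with ω hω
    exact min_eq_left hω
  have hvals : stopVal ξ σ' =ᵐ[P] stopVal ξ σ := by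
    filter_upwards [hσσ'] with ω hω
    rw [stopVal, stopVal, hω]
  have hlaw' : Measure.map (stopVal ξ σ') P = Measure.map (stopVal ξ τ) P := by
    rw [Measure.map_congr hvals, hlaw]
  have hZeq : stopValR ξ σ' =ᵐ[P] stopValR ξ τ :=
    stopValR_ae_eq_of_law_eq W hτ hσ's hσ'τ hlaw'
  -- the stopping time ρ = min (σ' + 1) τ
  set ρ : Ω → ℕ∞ := fun ω => min (σ' ω + 1) (τ ω) with hρdef
  have hρs : IsStop (natFilt ξ W.meas) ρ := isStop_min (isStop_add_one hσ's) hτ.1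
  have hρτ : ∀ ω, ρ ω ≤ τ ω := fun ω => min_le_right _ _
  have hσ'ρ : ∀ ω, σ' ω ≤ ρ ω := fun ω => le_min le_self_add (hσ'τ ω)
  obtain ⟨hYρint, hYρcx⟩ := condexp_stopVal W hτ hρs hρτ
  obtain ⟨hYσint, -⟩ := condexp_stopVal W hτ hσ's hσ'τ
  -- X_σ' is measurable with respect to the σ-algebra of the past up to ρ
  have hsm : AEStronglyMeasurable[stopSA (natFilt ξ W.meas) ρ hρs] (stopValR ξ σ') P := by
    refine StronglyMeasurable.aestronglyMeasurable ?_
    refine Measurable.stronglyMeasurable ?_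
    exact measurable_from_top.comp
      ((measurable_stopSA_stopVal' W.meas hσ's).mono
        (stopSA_mono (natFilt ξ W.meas) hσ's hρs hσ'ρ) le_rfl)
  have h2 : P[stopValR ξ σ' | stopSA (natFilt ξ W.meas) ρ hρs] =ᵐ[P] stopValR ξ σ' :=
    condExp_of_aestronglyMeasurable' (stopSA_le _ _ _) hsm hYσint
  have h1 : P[stopValR ξ τ | stopSA (natFilt ξ W.meas) ρ hρs]
      =ᵐ[P] P[stopValR ξ σ' | stopSA (natFilt ξ W.meas) ρ hρs] :=
    condExp_congr_ae hZeq.symm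
  have htotal : stopValR ξ ρ =ᵐ[P] stopValR ξ σ' := hYρcx.trans (h1.trans h2)
  -- conclude pointwise
  filter_upwards [htotal, hτ.2.1, W.ae_pm, hστae] with ω hval hfin hpm hle
  show σ ω = τ ω
  by_contra hne
  have hlt : σ ω < τ ω := lt_of_le_of_ne hle hne
  have hσ'ω : σ' ω = σ ω := min_eq_left hle
  have hνe : σ ω ≠ ⊤ := by
    intro hc; rw [hc] at hlt; exact absurd hlt not_top_lt
  have hadd : σ ω + 1 ≤ τ ω := (ENat.add_one_le_iff hνe).mpr hlt
  have hρω : ρ ω = σ ω + 1 := by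
    show min (σ' ω + 1) (τ ω) = σ ω + 1
    rw [hσ'ω]
    exact min_eq_left hadd
  set k := (σ ω).toNat with hkdef
  have hk : σ ω = (k : ℕ∞) := (ENat.coe_toNat hνe).symm
  have hρω2 : ρ ω = ((k + 1 : ℕ) : ℕ∞) := by rw [hρω, hk]; push_cast; rfl
  have hσ'k : σ' ω = ((k : ℕ) : ℕ∞) := by rw [hσ'ω, hk]
  have hv1 : stopValR ξ ρ ω = ((walk ξ (k + 1) ω : ℤ) : ℝ) := by
    simp only [stopValR, stopVal, hρω2, ENat.toNat_coe]
  have hv2 : stopValR ξ σ' ω = ((walk ξ k ω : ℤ) : ℝ) := by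
    simp only [stopValR, stopVal, hσ'k, ENat.toNat_coe]
  rw [hv1, hv2] at hval
  have hw : walk ξ (k + 1) ω = walk ξ k ω := by exact_mod_cast hval
  rw [walk_succ] at hw
  rcases hpm (k + 1) with h' | h' <;> omega

end RWSkorokhod
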